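/- arXiv:math/0605792 — 3 statements merged into one kernel-verified Lean document; each statement's English description precedes it below -/
import Mathlib

section
/- Let p ∈ ℝ³, p ≠ 0, and let θ, ω ∈ ℝ³ be unit vectors with θ·p = 0, ω·p = 0, θ·ω = 0. For λ ∈ ℂ\{0} set κ₁(λ) := (i|p|/4)(λ + 1/λ), κ₂(λ) := (|p|/4)(λ − 1/λ), and k(λ) := κ₁(λ)θ + κ₂(λ)ω + p/2 ∈ ℂ³. Then for every λ ∈ ℂ\{0} the vector k(λ) satisfies k(λ)² = 0 and p² = 2 k(λ)·p, and the map λ ↦ k(λ) is a bijection from ℂ\{0} onto Z_p := {k ∈ ℂ³ : k² = 0, p² = 2k·p}, whose inverse is k ↦ λ(k) := 2 k·(θ + iω)/(i|p|). -/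
open MeasureTheory Real
open scoped ENNReal BigOperators Classical

noncomputable section

/-- ℝ³ with the Euclidean norm. -/
abbrev R3 : Type := EuclideanSpace ℝ (Fin 3)
/-- ℂ³ with the Euclidean (Hermitian) norm, i.e. the Euclidean norm of ℝ⁶. -/
abbrev C3 : Type := EuclideanSpace ℂ (Fin 3)

/-- Inclusion of real vectors into ℂ³. -/
def toC (x : R3) : C3 := WithLp.toLp 2 (fun j => (x j : ℂ))

/-- Complex bilinear dot product of `k ∈ ℂ³` with a real vector `ξ`. -/
def dotCR (k : C3) (ξ : R3) : ℂ := ∑ j, k j * (ξ j : ℂ)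

/-- Complex bilinear dot product on ℂ³. -/
def dotCC (k w : C3) : ℂ := ∑ j, k j * w j

/-- `k² = k₁² + k₂² + k₃²`. -/
def kSq (k : C3) : ℂ := ∑ j, k j * k j

/-- `Σ = {k ∈ ℂ³ : k² = 0}`. -/
def SigmaSet : Set C3 := {k | kSq k = 0}

/-- Componentwise imaginary part. -/
def imVec (k : C3) : R3 := WithLp.toLp 2 (fun j => (k j).im)
/-- Componentwise real part. -/
def reVec (k : C3) : R3 := WithLp.toLp 2 (fun j => (k j).re)

/-- The weighted L^∞ norm `‖u‖_μ = ess sup (1+|p|)^μ |u(p)|`, valued in `ℝ≥0∞`. -/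
def wnorm (μ : ℝ) (u : R3 → ℂ) : ℝ≥0∞ :=
  essSup (fun p => ENNReal.ofReal ((1 + ‖p‖) ^ μ) * (‖u p‖₊ : ℝ≥0∞)) volume

/-- The integral term `∫ v̂(p+ξ) H(k,−ξ)/(ξ²+2k·ξ) dξ` of the Faddeev equation;
this is also the operator `A(k)` applied to `Hk`. -/
def faddeevInt (v : R3 → ℂ) (Hk : R3 → ℂ) (k : C3) (p : R3) : ℂ :=
  ∫ ξ : R3, v (p + ξ) * Hk (-ξ) / (((‖ξ‖ ^ 2 : ℝ) : ℂ) + 2 * dotCR k ξ)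

/-- `k_γ(p) = p/2 + (i|p|/2)γ(p)`. -/
def kgamma (γ : R3 → R3) (p : R3) : C3 :=
  WithLp.toLp 2 (fun j => (p j : ℂ) / 2 + Complex.I * ((‖p‖ : ℝ) / 2) * (γ p j : ℂ))

/-- `k(λ) = κ₁(λ)θ + κ₂(λ)ω + p/2` with `κ₁ = (i|p|/4)(λ+1/λ)`, `κ₂ = (|p|/4)(λ−1/λ)`. -/
def kOf (p θ ω : R3) (l : ℂ) : C3 :=
  (Complex.I * (‖p‖ : ℂ) / 4 * (l + 1 / l)) • toC θ
    + ((‖p‖ : ℂ) / 4 * (l - 1 / l)) • toC ω + ((1 : ℂ) / 2) • toC p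

/-- `λ(k) = 2k·(θ+iω)/(i|p|)`. -/
def lamOf (p θ ω : R3) (k : C3) : ℂ :=
  2 * dotCC k (toC θ + Complex.I • toC ω) / (Complex.I * (‖p‖ : ℂ))

/-- `Z_p = {k ∈ ℂ³ : k² = 0, p² = 2k·p}`. -/
def Zset (p : R3) : Set C3 := {k | kSq k = 0 ∧ ((‖p‖ ^ 2 : ℝ) : ℂ) = 2 * dotCR k p}

lemma col_ortho (θ ω u : Fin 3 → ℝ)
    (h00 : ∑ j, θ j * θ j = 1) (h11 : ∑ j, ω j * ω j = 1) (h22 : ∑ j, u j * u j = 1)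
    (h01 : ∑ j, θ j * ω j = 0) (h02 : ∑ j, θ j * u j = 0) (h12 : ∑ j, ω j * u j = 0) :
    ∀ m n : Fin 3, θ m * θ n + ω m * ω n + u m * u n = if m = n then 1 else 0 := by
  simp only [Fin.sum_univ_three] at h00 h11 h22 h01 h02 h12
  set M : Matrix (Fin 3) (Fin 3) ℝ := Matrix.of ![θ, ω, u] with hM
  have h1 : M * M.transpose = 1 := by
    ext i j
    fin_cases i <;> fin_cases j <;>
      simp [Matrix.mul_apply, Fin.sum_univ_three, M, Matrix.one_apply,
        Matrix.transpose_apply, Matrix.vecHead, Matrix.vecTail, Function.comp] <;>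
      linarith
  have h2 : M.transpose * M = 1 := mul_eq_one_comm.mp h1
  intro m n
  have := congrFun (congrFun h2 m) n
  fin_cases m <;> fin_cases n <;>
  simpa [Matrix.mul_apply, Fin.sum_univ_three, M, Matrix.one_apply,
    Matrix.transpose_apply, Matrix.vecHead, Matrix.vecTail, Function.comp] using this

lemma norm_sq_sum (x : R3) : ∑ j, x j * x j = ‖x‖ ^ 2 := by
  have := real_inner_self_eq_norm_sq x
  rw [EuclideanSpace.norm_eq, Real.sq_sqrt (by positivity)]
  simp [Real.norm_eq_abs, sq_abs, sq]

lemma kOf_apply (p θ ω : R3) (l : ℂ) (j : Fin 3) :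
    kOf p θ ω l j = (Complex.I * (‖p‖ : ℂ) / 4 * (l + 1 / l)) * (θ j : ℂ)
      + ((‖p‖ : ℂ) / 4 * (l - 1 / l)) * (ω j : ℂ) + (1 / 2) * (p j : ℂ) := by
  simp [kOf, toC, PiLp.add_apply, PiLp.smul_apply, smul_eq_mul]


/-- `λ ↦ k(λ)` is a bijection from `ℂ\{0}` onto `Z_p`, with inverse `λ(k)`. -/
theorem stmt_8 (p θ ω : R3) (hp : p ≠ 0) (hθ : ‖θ‖ = 1) (hω : ‖ω‖ = 1)
    (hθp : ∑ j, θ j * p j = 0) (hωp : ∑ j, ω j * p j = 0)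
    (hθω : ∑ j, θ j * ω j = 0) :
    (∀ l : ℂ, l ≠ 0 → kOf p θ ω l ∈ Zset p) ∧
    Set.BijOn (kOf p θ ω) {l : ℂ | l ≠ 0} (Zset p) ∧
    Set.InvOn (lamOf p θ ω) (kOf p θ ω) {l : ℂ | l ≠ 0} (Zset p) := by
  have hpn : ‖p‖ ≠ 0 := norm_ne_zero_iff.mpr hp
  have hpC : ((‖p‖ : ℝ) : ℂ) ≠ 0 := by exact_mod_cast hpn
  have hθθ : ∑ j, θ j * θ j = 1 := by rw [norm_sq_sum, hθ]; norm_num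
  have hωω : ∑ j, ω j * ω j = 1 := by rw [norm_sq_sum, hω]; norm_num
  have hpp : ∑ j, p j * p j = ‖p‖ ^ 2 := norm_sq_sum p
  -- complex coerced, expanded versions
  have cθθ : ((θ 0 : ℝ) : ℂ) * θ 0 + (θ 1 : ℂ) * θ 1 + (θ 2 : ℂ) * θ 2 = 1 := by
    have := hθθ; simp only [Fin.sum_univ_three] at this; exact_mod_cast this
  have cωω : ((ω 0 : ℝ) : ℂ) * ω 0 + (ω 1 : ℂ) * ω 1 + (ω 2 : ℂ) * ω 2 = 1 := by
    have := hωω; simp only [Fin.sum_univ_three] at this; exact_mod_cast this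
  have cpp : ((p 0 : ℝ) : ℂ) * p 0 + (p 1 : ℂ) * p 1 + (p 2 : ℂ) * p 2 = ((‖p‖ : ℝ) : ℂ) ^ 2 := by
    have := hpp; simp only [Fin.sum_univ_three] at this; exact_mod_cast this
  have cθω : ((θ 0 : ℝ) : ℂ) * ω 0 + (θ 1 : ℂ) * ω 1 + (θ 2 : ℂ) * ω 2 = 0 := by
    have := hθω; simp only [Fin.sum_univ_three] at this; exact_mod_cast this
  have cθp : ((θ 0 : ℝ) : ℂ) * p 0 + (θ 1 : ℂ) * p 1 + (θ 2 : ℂ) * p 2 = 0 := by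
    have := hθp; simp only [Fin.sum_univ_three] at this; exact_mod_cast this
  have cωp : ((ω 0 : ℝ) : ℂ) * p 0 + (ω 1 : ℂ) * p 1 + (ω 2 : ℂ) * p 2 = 0 := by
    have := hωp; simp only [Fin.sum_univ_three] at this; exact_mod_cast this
  -- FORWARD
  have hfwd : ∀ l : ℂ, l ≠ 0 → kOf p θ ω l ∈ Zset p := by
    intro l hl
    have hinv : l * (1 / l) = 1 := by field_simp
    constructor
    · show kSq _ = 0
      simp only [kSq, Fin.sum_univ_three, kOf_apply]
      linear_combination
        (Complex.I * (‖p‖:ℂ) / 4 * (l + 1/l))^2 * cθθ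
        + ((‖p‖:ℂ) / 4 * (l - 1/l))^2 * cωω
        + (1/4 : ℂ) * cpp
        + 2 * (Complex.I * (‖p‖:ℂ) / 4 * (l + 1/l)) * ((‖p‖:ℂ) / 4 * (l - 1/l)) * cθω
        + (Complex.I * (‖p‖:ℂ) / 4 * (l + 1/l)) * cθp
        + ((‖p‖:ℂ) / 4 * (l - 1/l)) * cωp
        + ((‖p‖:ℂ)^2 / 16 * (l + 1/l)^2) * Complex.I_sq
        - ((‖p‖:ℂ)^2 / 4) * hinv
    · show _ = _
      simp only [dotCR, Fin.sum_univ_three, kOf_apply]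
      push_cast
      linear_combination (-2 * (Complex.I * (‖p‖:ℂ) / 4 * (l + 1/l))) * cθp
        + (-2 * ((‖p‖:ℂ) / 4 * (l - 1/l))) * cωp - cpp
  
  -- lamOf expanded
  have hlam_eq : ∀ k : C3, lamOf p θ ω k = 2 * ((k 0 * θ 0 + k 1 * θ 1 + k 2 * θ 2)
      + Complex.I * (k 0 * ω 0 + k 1 * ω 1 + k 2 * ω 2)) / (Complex.I * (‖p‖ : ℂ)) := by
    intro k
    simp only [lamOf, dotCC, Fin.sum_univ_three, PiLp.add_apply, PiLp.smul_apply,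
      smul_eq_mul, toC]
    ring_nf
  have hipl : Complex.I * ((‖p‖:ℝ):ℂ) ≠ 0 := mul_ne_zero Complex.I_ne_zero hpC
  -- LEFT INVERSE
  have hleft : ∀ l : ℂ, l ≠ 0 → lamOf p θ ω (kOf p θ ω l) = l := by
    intro l hl
    rw [hlam_eq]
    rw [div_eq_iff hipl]
    simp only [kOf_apply]
    linear_combination
      (2 * (Complex.I * (‖p‖:ℂ) / 4 * (l + 1/l))) * cθθ
      + (2 * Complex.I * ((‖p‖:ℂ) / 4 * (l - 1/l))) * cωω
      + (2 * ((‖p‖:ℂ) / 4 * (l - 1/l)) + 2 * Complex.I * (Complex.I * (‖p‖:ℂ) / 4 * (l + 1/l))) * cθω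
      + cθp + Complex.I * cωp
  -- column orthonormality
  have huu : ∑ j, (p j / ‖p‖) * (p j / ‖p‖) = 1 := by
    have : ∑ j, (p j / ‖p‖) * (p j / ‖p‖) = (∑ j, p j * p j) / ‖p‖^2 := by
      rw [Finset.sum_div]; congr 1; ext j; rw [div_mul_div_comm, pow_two ‖p‖]
    rw [this, hpp]; field_simp
  have hθu : ∑ j, θ j * (p j / ‖p‖) = 0 := by
    have : ∑ j, θ j * (p j / ‖p‖) = (∑ j, θ j * p j) / ‖p‖ := by
      rw [Finset.sum_div]; congr 1; ext j; ring
    rw [this, hθp, zero_div]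
  have hωu : ∑ j, ω j * (p j / ‖p‖) = 0 := by
    have : ∑ j, ω j * (p j / ‖p‖) = (∑ j, ω j * p j) / ‖p‖ := by
      rw [Finset.sum_div]; congr 1; ext j; ring
    rw [this, hωp, zero_div]
  have hC := col_ortho (fun j => θ j) (fun j => ω j) (fun j => p j / ‖p‖)
    hθθ hωω huu hθω hθu hωu
  have hCc : ∀ m n : Fin 3, ((θ m:ℝ):ℂ) * θ n + ((ω m:ℝ):ℂ) * ω n
      + (((p m / ‖p‖ : ℝ)):ℂ) * ((p n / ‖p‖ : ℝ):ℂ) = if m = n then 1 else 0 := by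
    intro m n
    have := hC m n
    split_ifs at this ⊢ <;> exact_mod_cast this
  -- BACKWARD
  have hbwd : ∀ k ∈ Zset p, lamOf p θ ω k ≠ 0 ∧ kOf p θ ω (lamOf p θ ω k) = k := by
    rintro k ⟨hk1, hk2⟩
    set a : ℂ := k 0 * θ 0 + k 1 * θ 1 + k 2 * θ 2 with ha
    set b : ℂ := k 0 * ω 0 + k 1 * ω 1 + k 2 * ω 2 with hb
    set c : ℂ := k 0 * ((p 0 / ‖p‖ : ℝ):ℂ) + k 1 * ((p 1 / ‖p‖ : ℝ):ℂ)
      + k 2 * ((p 2 / ‖p‖ : ℝ):ℂ) with hc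
    have hdec : ∀ j : Fin 3, a * θ j + b * ω j + c * ((p j / ‖p‖ : ℝ):ℂ) = k j := by
      intro j
      have e0 := hCc 0 j
      have e1 := hCc 1 j
      have e2 := hCc 2 j
      have hdelta : k j = k 0 * (if (0:Fin 3) = j then 1 else 0)
          + k 1 * (if (1:Fin 3) = j then 1 else 0)
          + k 2 * (if (2:Fin 3) = j then 1 else 0) := by
        fin_cases j <;> simp
      rw [ha, hb, hc]
      linear_combination k 0 * e0 + k 1 * e1 + k 2 * e2 - hdelta
    have hks : kSq k = 0 := hk1
    simp only [kSq, Fin.sum_univ_three] at hks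
    have habc : a^2 + b^2 + c^2 = 0 := by
      have h0 := hdec 0
      have h1 := hdec 1
      have h2 := hdec 2
      rw [ha, hb, hc] at h0 h1 h2 ⊢
      linear_combination k 0 * h0 + k 1 * h1 + k 2 * h2 + hks
    have hk2' : ((‖p‖:ℝ):ℂ)^2 = 2 * (k 0 * p 0 + k 1 * p 1 + k 2 * p 2) := by
      have := hk2
      simp only [dotCR, Fin.sum_univ_three] at this
      push_cast at this ⊢
      exact_mod_cast this

    have hinvp : ((‖p‖:ℝ):ℂ) * (1/((‖p‖:ℝ):ℂ)) = 1 := by field_simp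
    have hc2 : c = ((‖p‖:ℝ):ℂ) / 2 := by
      rw [hc]
      push_cast
      linear_combination (-(1:ℂ)/(2*((‖p‖:ℝ):ℂ))) * hk2' + (((‖p‖:ℝ):ℂ)/2) * hinvp
    have hab : a^2 + b^2 = -((‖p‖:ℝ):ℂ)^2 / 4 := by
      linear_combination habc - (c + ((‖p‖:ℝ):ℂ)/2) * hc2
    have hprod : (a + Complex.I * b) * (a - Complex.I * b) = -((‖p‖:ℝ):ℂ)^2 / 4 := by
      linear_combination hab - b^2 * Complex.I_sq
    have habne : a + Complex.I * b ≠ 0 := by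
      intro h
      rw [h, zero_mul] at hprod
      have : ((‖p‖:ℝ):ℂ)^2 = 0 := by linear_combination 4 * hprod
      exact hpC (sq_eq_zero_iff.mp this)
    set l : ℂ := lamOf p θ ω k with hldef
    have hlam : l = 2 * (a + Complex.I * b) / (Complex.I * ((‖p‖:ℝ):ℂ)) := by
      rw [hldef, hlam_eq, ha, hb]
    have hl0 : l ≠ 0 := by
      rw [hlam]
      exact div_ne_zero (mul_ne_zero two_ne_zero habne) hipl
    have hinvl : l * (1 / l) = 1 := by field_simp
    have e1 : a + Complex.I * b = Complex.I * ((‖p‖:ℝ):ℂ) * l / 2 := by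
      rw [hlam]
      field_simp
    have hprod2 : (Complex.I * ((‖p‖:ℝ):ℂ) * l / 2) * (a - Complex.I * b)
        = -((‖p‖:ℝ):ℂ)^2 / 4 := by
      rw [← e1]; exact hprod
    have e2 : (a - Complex.I * b) * l = Complex.I * ((‖p‖:ℝ):ℂ) / 2 := by
      have h' : Complex.I * ((‖p‖:ℝ):ℂ) / 2 * ((a - Complex.I * b) * l)
          = Complex.I * ((‖p‖:ℝ):ℂ) / 2 * (Complex.I * ((‖p‖:ℝ):ℂ) / 2) := by
        linear_combination hprod2 - ((‖p‖:ℝ):ℂ)^2 / 4 * Complex.I_sq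
      exact mul_left_cancel₀ (by simpa using hipl) h'
    have ha' : a = Complex.I * ((‖p‖:ℝ):ℂ) / 4 * (l + 1/l) := by
      linear_combination (1/2 : ℂ) * e1 + (1/(2*l)) * e2
        - ((a - Complex.I * b)/2) * hinvl
    have hIb : Complex.I * b = Complex.I * (((‖p‖:ℝ):ℂ) / 4 * (l - 1/l)) := by
      linear_combination (1/2 : ℂ) * e1 - (1/(2*l)) * e2
        + ((a - Complex.I * b)/2) * hinvl
    have hb' : b = ((‖p‖:ℝ):ℂ) / 4 * (l - 1/l) :=
      mul_left_cancel₀ Complex.I_ne_zero hIb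
    refine ⟨hl0, ?_⟩
    ext j
    rw [kOf_apply, ← hdec j]
    push_cast
    linear_combination (-((θ j:ℝ):ℂ)) * ha' - ((ω j:ℝ):ℂ) * hb'
      - ((p j:ℝ):ℂ)/((‖p‖:ℝ):ℂ) * hc2 - ((p j:ℝ):ℂ)/2 * hinvp
  -- ASSEMBLY
  have hmapsk : Set.MapsTo (kOf p θ ω) {l : ℂ | l ≠ 0} (Zset p) := fun l hl => hfwd l hl
  have hmapsl : Set.MapsTo (lamOf p θ ω) (Zset p) {l : ℂ | l ≠ 0} := fun k hk => (hbwd k hk).1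
  have hLeft : Set.LeftInvOn (lamOf p θ ω) (kOf p θ ω) {l : ℂ | l ≠ 0} := fun l hl => hleft l hl
  have hRight : Set.RightInvOn (lamOf p θ ω) (kOf p θ ω) (Zset p) := fun k hk => (hbwd k hk).2
  exact ⟨hfwd, Set.InvOn.bijOn ⟨hLeft, hRight⟩ hmapsk hmapsl, hLeft, hRight⟩
end
end

section
/- Let p ∈ ℝ³, p ≠ 0, and let θ, ω ∈ ℝ³ be unit vectors with θ·p = 0, ω·p = 0, θ·ω = 0. For λ ∈ ℂ\{0} set k(λ) := (i|p|/4)(λ + 1/λ)θ + (|p|/4)(λ − 1/λ)ω + p/2 ∈ ℂ³. Then |Im k(λ)| = |Re k(λ)| = (|p|/4)(|λ| + 1/|λ|) for every λ ∈ ℂ\{0}, where Re k(λ), Im k(λ) ∈ ℝ³ are the real and imaginary parts of k(λ) taken componentwise and |·| is the Euclidean norm on ℝ³. -/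
open MeasureTheory Real
open scoped ENNReal BigOperators Classical

noncomputable section

lemma sum_combo (θ ω q : R3) (A B C : ℝ)
    (hθ : ∑ j, θ j * θ j = 1) (hω : ∑ j, ω j * ω j = 1)
    (hθp : ∑ j, θ j * q j = 0) (hωp : ∑ j, ω j * q j = 0)
    (hθω : ∑ j, θ j * ω j = 0) :
    ∑ j, (A * θ j + B * ω j + C * q j)^2
      = A^2 + B^2 + C^2 * ∑ j, q j * q j := by
  have h : ∀ j : Fin 3, (A * θ j + B * ω j + C * q j)^2
      = A^2 * (θ j * θ j) + B^2 * (ω j * ω j) + C^2 * (q j * q j)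
        + 2*A*B * (θ j * ω j) + 2*A*C * (θ j * q j) + 2*B*C * (ω j * q j) := by
    intro j; ring
  simp only [h, Finset.sum_add_distrib, ← Finset.mul_sum, hθ, hω, hθp, hωp, hθω]
  ring

lemma norm_sq_real (x : R3) : ‖x‖ = Real.sqrt (∑ j, (x j)^2) := by
  rw [EuclideanSpace.norm_eq]
  simp_rw [Real.norm_eq_abs, sq_abs]


/-- `|Im k(λ)| = |Re k(λ)| = (|p|/4)(|λ| + 1/|λ|)`. -/
theorem stmt_9 (p θ ω : R3) (hp : p ≠ 0) (hθ : ‖θ‖ = 1) (hω : ‖ω‖ = 1)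
    (hθp : ∑ j, θ j * p j = 0) (hωp : ∑ j, ω j * p j = 0)
    (hθω : ∑ j, θ j * ω j = 0) :
    ∀ l : ℂ, l ≠ 0 →
      ‖imVec (kOf p θ ω l)‖ = ‖reVec (kOf p θ ω l)‖ ∧
      ‖imVec (kOf p θ ω l)‖ = ‖p‖ / 4 * (‖l‖ + 1 / ‖l‖) := by
  intro l hl
  have hnp : (0:ℝ) < ‖p‖ := norm_pos_iff.mpr hp
  set a : ℝ := ‖p‖ / 4 with ha
  have ha0 : 0 < a := by positivity
  have sθ : ∑ j, θ j * θ j = 1 := by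
    have h1 := norm_sq_real θ
    rw [hθ] at h1
    have hnn : 0 ≤ ∑ j, (θ j)^2 := Finset.sum_nonneg fun j _ => sq_nonneg _
    have h2 : ∑ j, (θ j)^2 = 1 := by nlinarith [Real.sq_sqrt hnn]
    simpa [sq] using h2
  have sω : ∑ j, ω j * ω j = 1 := by
    have h1 := norm_sq_real ω
    rw [hω] at h1
    have hnn : 0 ≤ ∑ j, (ω j)^2 := Finset.sum_nonneg fun j _ => sq_nonneg _
    have h2 : ∑ j, (ω j)^2 = 1 := by nlinarith [Real.sq_sqrt hnn]
    simpa [sq] using h2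
  have sp : ∑ j, p j * p j = ‖p‖^2 := by
    have h1 := norm_sq_real p
    have hnn : 0 ≤ ∑ j, (p j)^2 := Finset.sum_nonneg fun j _ => sq_nonneg _
    rw [h1, Real.sq_sqrt hnn]
    simp [sq]
  have him : ∀ j, imVec (kOf p θ ω l) j
      = a * (l + 1/l).re * θ j + a * (l - 1/l).im * ω j + 0 * p j := by
    intro j
    simp [imVec, kOf, toC, ha, Complex.add_im, Complex.mul_im, Complex.div_im, Complex.div_re]
    try ring
  have hre : ∀ j, reVec (kOf p θ ω l) j
      = (-(a * (l + 1/l).im)) * θ j + a * (l - 1/l).re * ω j + (1/2) * p j := by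
    intro j
    simp [reVec, kOf, toC, ha, Complex.add_re, Complex.mul_re, Complex.div_im, Complex.div_re]
    try ring
  set n : ℝ := Complex.normSq l with hnd
  have hn : 0 < n := Complex.normSq_pos.mpr hl
  have sre : (l + 1/l).re = l.re + l.re / n := by
    simp [Complex.add_re, Complex.div_re, hnd]
    try ring
  have sim : (l + 1/l).im = l.im - l.im / n := by
    simp [Complex.add_im, Complex.div_im, hnd]
    try ring
  have dre : (l - 1/l).re = l.re - l.re / n := by
    simp [Complex.sub_re, Complex.div_re, hnd]
    try ring
  have dim : (l - 1/l).im = l.im + l.im / n := by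
    simp [Complex.sub_im, Complex.div_im, hnd]
    try ring
  have habs : ‖l‖ = Real.sqrt n := by rw [Complex.norm_def]
  have hnl : l.re^2 + l.im^2 = n := by rw [hnd, Complex.normSq_apply]; ring
  have hsq : 0 < Real.sqrt n := Real.sqrt_pos.mpr hn
  have hsqn : Real.sqrt n ^ 2 = n := Real.sq_sqrt hn.le
  have hmul : Real.sqrt n * (1 / Real.sqrt n) = 1 := by
    field_simp
  have hinv : (1 / Real.sqrt n)^2 = 1/n := by rw [div_pow, one_pow, hsqn]
  have rhs2 : (Real.sqrt n + 1 / Real.sqrt n)^2 = n + 2 + 1/n := by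
    linear_combination hsqn + 2 * hmul + hinv
  have key : ‖p‖ / 4 * (‖l‖ + 1 / ‖l‖)
      = a * (Real.sqrt n + 1 / Real.sqrt n) := by rw [habs, ha]
  have eim : ‖imVec (kOf p θ ω l)‖ = a * (Real.sqrt n + 1 / Real.sqrt n) := by
    rw [norm_sq_real]
    have h1 : ∑ j, (imVec (kOf p θ ω l) j)^2
        = (a * (l + 1/l).re)^2 + (a * (l - 1/l).im)^2 + 0^2 * ∑ j, p j * p j := by
      simp only [him]; exact sum_combo θ ω p _ _ _ sθ sω hθp hωp hθω
    rw [h1, sre, dim]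
    have h2 : (a * (l.re + l.re / n))^2 + (a * (l.im + l.im / n))^2 + 0^2 * ∑ j, p j * p j
        = a^2 * (1 + 1/n)^2 * (l.re^2 + l.im^2) := by ring
    rw [h2, hnl]
    have h3 : a^2 * (1 + 1/n)^2 * n = (a * (Real.sqrt n + 1 / Real.sqrt n))^2 := by
      rw [mul_pow, rhs2]; field_simp; ring
    rw [h3, Real.sqrt_sq (by positivity)]
  refine ⟨?_, by rw [eim, key]⟩
  rw [eim, norm_sq_real]
  have h1 : ∑ j, (reVec (kOf p θ ω l) j)^2
      = (-(a * (l + 1/l).im))^2 + (a * (l - 1/l).re)^2 + (1/2)^2 * ∑ j, p j * p j := by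
    simp only [hre]; exact sum_combo θ ω p _ _ _ sθ sω hθp hωp hθω
  rw [h1, sim, dre, sp]
  have hp4 : ‖p‖ = 4 * a := by rw [ha]; ring
  rw [hp4]
  have h2 : (-(a * (l.im - l.im / n)))^2 + (a * (l.re - l.re / n))^2 + (1/2)^2 * (4*a)^2
      = a^2 * (1 - 1/n)^2 * (l.re^2 + l.im^2) + 4 * a^2 := by ring
  rw [h2, hnl]
  have h3 : a^2 * (1 - 1/n)^2 * n + 4 * a^2 = (a * (Real.sqrt n + 1 / Real.sqrt n))^2 := by
    rw [mul_pow, rhs2]; field_simp; ring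
  rw [h3, Real.sqrt_sq (by positivity)]
end
end

section
/- There exists a constant n₂ > 0 such that for every λ ∈ ℂ and every ρ > 0 one has ∫_ℂ (|ζ|²+1) ρ / ( |ζ|² (1 + ρ(|ζ| + |ζ|⁻¹))² |ζ−λ| ) dReζ dImζ ≤ n₂, where the integral is with respect to Lebesgue measure on ℂ ≅ ℝ². -/
open MeasureTheory Set Metric Filter
open scoped ENNReal NNReal

noncomputable def Gf (ρ t : ℝ) : ℝ := ρ * (1 + t ^ 2) / (t + ρ * (1 + t ^ 2)) ^ 2

lemma Gf_nonneg {ρ t : ℝ} (hρ : 0 ≤ ρ) (_ht : 0 ≤ t) : 0 ≤ Gf ρ t := by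
  unfold Gf; positivity

lemma Gf_le_inv {ρ t : ℝ} (hρ : 0 < ρ) (ht : 0 < t) : Gf ρ t ≤ 1 / (4 * t) := by
  unfold Gf
  have hs : 0 < ρ * (1 + t ^ 2) := by positivity
  rw [div_le_div_iff₀ (by positivity) (by positivity)]
  nlinarith [sq_nonneg (t - ρ * (1 + t ^ 2))]

lemma Gf_le_sum {ρ t : ℝ} (hρ : 0 < ρ) (ht : 0 < t) :
    Gf ρ t ≤ 2 * ρ / (ρ + t) ^ 2 + 2 * ρ / (1 + ρ * t) ^ 2 := by
  unfold Gf
  rcases le_total t 1 with h1 | h1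
  · have hb : Gf ρ t ≤ 2 * ρ / (ρ + t) ^ 2 := by
      unfold Gf
      have ht1 : t ^ 2 ≤ 1 := by nlinarith
      have hnum : ρ * (1 + t ^ 2) ≤ 2 * ρ := by nlinarith
      have hden : (ρ + t) ^ 2 ≤ (t + ρ * (1 + t ^ 2)) ^ 2 := by
        apply pow_le_pow_left₀ (by positivity)
        nlinarith [mul_pos hρ (pow_pos ht 2)]
      exact div_le_div₀ (by positivity) hnum (by positivity) hden
    unfold Gf at hb
    have : (0:ℝ) ≤ 2 * ρ / (1 + ρ * t) ^ 2 := by positivity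
    linarith
  · have hb : ρ * (1 + t ^ 2) / (t + ρ * (1 + t ^ 2)) ^ 2 ≤ 2 * ρ / (1 + ρ * t) ^ 2 := by
      rw [div_le_div_iff₀ (by positivity) (by positivity)]
      have h2 : (t + ρ * t ^ 2) ^ 2 ≤ (t + ρ * (1 + t ^ 2)) ^ 2 := by
        apply pow_le_pow_left₀ (by positivity)
        nlinarith
      have h3 : ρ * (1 + t ^ 2) * (1 + ρ * t) ^ 2 ≤ 2 * ρ * (t + ρ * t ^ 2) ^ 2 := by
        have ht2 : 1 + t ^ 2 ≤ 2 * t ^ 2 := by nlinarith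
        have : (t + ρ * t ^ 2) ^ 2 = t ^ 2 * (1 + ρ * t) ^ 2 := by ring
        rw [this]
        nlinarith [mul_nonneg (mul_nonneg hρ.le (sq_nonneg (1 + ρ * t)))
          (by nlinarith : (0:ℝ) ≤ 2 * t ^ 2 - (1 + t ^ 2))]
      nlinarith
    have : (0:ℝ) ≤ 2 * ρ / (ρ + t) ^ 2 := by positivity
    linarith

lemma ftc_helper (A b c : ℝ) (hA : 0 ≤ A) (hb : 0 < b) (hc : 0 < c) :
    IntegrableOn (fun r : ℝ => A / (b + c * r) ^ 2) (Ioi 0) ∧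
      ∫ r in Ioi (0:ℝ), A / (b + c * r) ^ 2 = A / (c * b) := by
  set g : ℝ → ℝ := fun r => -(A / c) / (b + c * r)
  have hpos : ∀ x ∈ Ici (0:ℝ), 0 < b + c * x := fun x hx => by
    have : (0:ℝ) ≤ x := hx
    nlinarith
  have hderiv : ∀ x ∈ Ici (0:ℝ), HasDerivAt g (A / (b + c * x) ^ 2) x := by
    intro x hx
    have h1 : HasDerivAt (fun r : ℝ => b + c * r) c x := by
      simpa using ((hasDerivAt_id x).const_mul c).const_add b
    have h2 := (h1.inv (hpos x hx).ne')
    have h3 := h2.const_mul (-(A / c))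
    have e : A / (b + c * x) ^ 2 = -(A / c) * (-c / (b + c * x) ^ 2) := by field_simp
    rw [e]
    exact h3.congr_of_eventuallyEq (Filter.Eventually.of_forall fun y => by simp [g, div_eq_mul_inv])
  have htend : Tendsto g atTop (nhds 0) := by
    apply Tendsto.div_atTop (tendsto_const_nhds)
    exact tendsto_atTop_add_const_left _ b (Tendsto.const_mul_atTop hc tendsto_id)
  have hcont : ContinuousWithinAt g (Ici 0) 0 :=
    (hderiv 0 (self_mem_Ici)).continuousAt.continuousWithinAt
  have hnonneg : ∀ x ∈ Ioi (0:ℝ), 0 ≤ A / (b + c * x) ^ 2 := fun x hx => by positivity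
  have hint : IntegrableOn (fun r : ℝ => A / (b + c * r) ^ 2) (Ioi 0) :=
    integrableOn_Ioi_deriv_of_nonneg hcont (fun x hx => hderiv x (Ioi_subset_Ici_self hx)) hnonneg htend
  refine ⟨hint, ?_⟩
  rw [integral_Ioi_of_hasDerivAt_of_tendsto hcont (fun x hx => hderiv x (Ioi_subset_Ici_self hx)) hint htend]
  simp only [g]
  rw [mul_zero, add_zero]
  field_simp
  ring

lemma lintegral_fun_norm_complex (f : ℝ → ℝ≥0∞) (hf : Measurable f) :
    ∫⁻ x : ℂ, f ‖x‖ =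
      (2 : ℝ≥0∞) * .ofReal Real.pi * ∫⁻ r in Ioi (0 : ℝ), ENNReal.ofReal r * f r := by
  have hdim : Module.finrank ℝ ℂ = 2 := Complex.finrank_real_complex
  have h0 : ∫⁻ x : ℂ, f ‖x‖ =
      ∫⁻ x : ({(0 : ℂ)}ᶜ : Set ℂ), f ‖x.1‖ ∂((volume : Measure ℂ).comap Subtype.val) := by
    rw [lintegral_subtype_comap (measurableSet_singleton (0:ℂ)).compl (fun ζ : ℂ => f ‖ζ‖),
      MeasureTheory.restrict_compl_singleton]
  rw [h0]
  have mp := Measure.measurePreserving_homeomorphUnitSphereProd (volume : Measure ℂ)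
  have hg : Measurable fun p : sphere (0:ℂ) 1 × Ioi (0:ℝ) => f p.2 :=
    (hf.comp measurable_subtype_coe).comp measurable_snd
  have h1 : ∫⁻ x : ({(0 : ℂ)}ᶜ : Set ℂ), f ‖x.1‖ ∂((volume : Measure ℂ).comap Subtype.val)
      = ∫⁻ p : sphere (0:ℂ) 1 × Ioi (0:ℝ), f p.2
          ∂((volume : Measure ℂ).toSphere.prod (.volumeIoiPow (Module.finrank ℝ ℂ - 1))) := by
    rw [← mp.lintegral_comp hg]
    congr 1
    funext x
    simp [homeomorphUnitSphereProd, homeomorphSphereProd]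
  rw [h1, lintegral_prod _ hg.aemeasurable]
  simp only [lintegral_const]
  rw [Measure.toSphere_apply_univ, hdim]
  have h2 : ∫⁻ r : Ioi (0:ℝ), f r ∂(Measure.volumeIoiPow (2 - 1))
      = ∫⁻ r in Ioi (0:ℝ), ENNReal.ofReal r * f r := by
    rw [Measure.volumeIoiPow]
    rw [lintegral_withDensity_eq_lintegral_mul _
      ((measurable_subtype_coe.pow_const _).ennreal_ofReal)
      (show Measurable fun r : Ioi (0:ℝ) => f r.1 from hf.comp measurable_subtype_coe)]
    simp only [Pi.mul_apply]
    rw [lintegral_subtype_comap measurableSet_Ioi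
      (fun r : ℝ => ENNReal.ofReal (r ^ (2-1)) * f r)]
    simp [pow_one]
  rw [h2, Complex.volume_ball]
  rw [show ENNReal.ofReal Real.pi = (NNReal.pi : ℝ≥0∞) by
    rw [← NNReal.coe_real_pi, ENNReal.ofReal_coe_nnreal]]
  simp only [ENNReal.ofReal_one, one_pow, one_mul]
  ring

lemma Gf_measurable (ρ : ℝ) : Measurable fun r : ℝ => ENNReal.ofReal (2 * Gf ρ r / r) := by
  unfold Gf
  fun_prop

lemma K1 (ρ : ℝ) (hρ : 0 < ρ) :
    ∫⁻ ζ : ℂ, ENNReal.ofReal (2 * Gf ρ ‖ζ‖ / ‖ζ‖) ≤ ENNReal.ofReal (16 * Real.pi) := by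
  rw [lintegral_fun_norm_complex _ (Gf_measurable ρ)]
  have step : (∫⁻ r in Ioi (0:ℝ), ENNReal.ofReal r * ENNReal.ofReal (2 * Gf ρ r / r))
      ≤ ENNReal.ofReal 8 := by
    have hchain : ∀ r ∈ Ioi (0:ℝ), ENNReal.ofReal r * ENNReal.ofReal (2 * Gf ρ r / r)
        ≤ ENNReal.ofReal (4 * ρ / (ρ + 1 * r) ^ 2 + 4 * ρ / (1 + ρ * r) ^ 2) := by
      intro r hr
      have hr0 : (0:ℝ) < r := hr
      rw [← ENNReal.ofReal_mul hr0.le]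
      apply ENNReal.ofReal_le_ofReal
      have h1 : r * (2 * Gf ρ r / r) = 2 * Gf ρ r := by field_simp
      rw [h1]
      have := Gf_le_sum hρ hr0
      have h2 : ρ + 1 * r = ρ + r := by ring
      rw [h2]
      have h3 : 4 * ρ / (ρ + r) ^ 2 = 2 * (2 * ρ / (ρ + r) ^ 2) := by ring
      have h4 : 4 * ρ / (1 + ρ * r) ^ 2 = 2 * (2 * ρ / (1 + ρ * r) ^ 2) := by ring
      rw [h3, h4]
      linarith
    calc (∫⁻ r in Ioi (0:ℝ), ENNReal.ofReal r * ENNReal.ofReal (2 * Gf ρ r / r))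
        ≤ ∫⁻ r in Ioi (0:ℝ),
            ENNReal.ofReal (4 * ρ / (ρ + 1 * r) ^ 2 + 4 * ρ / (1 + ρ * r) ^ 2) :=
          setLIntegral_mono' measurableSet_Ioi hchain
      _ = ENNReal.ofReal (∫ r in Ioi (0:ℝ),
            (4 * ρ / (ρ + 1 * r) ^ 2 + 4 * ρ / (1 + ρ * r) ^ 2)) := by
          rw [← ofReal_integral_eq_lintegral_ofReal]
          · exact ((ftc_helper (4*ρ) ρ 1 (by positivity) hρ one_pos).1.add
              ((ftc_helper (4*ρ) 1 ρ (by positivity) one_pos hρ).1))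
          · exact Filter.Eventually.of_forall fun r => by positivity
      _ ≤ ENNReal.ofReal 8 := by
          apply ENNReal.ofReal_le_ofReal
          rw [integral_add (ftc_helper (4*ρ) ρ 1 (by positivity) hρ one_pos).1
            ((ftc_helper (4*ρ) 1 ρ (by positivity) one_pos hρ).1),
            (ftc_helper (4*ρ) ρ 1 (by positivity) hρ one_pos).2,
            (ftc_helper (4*ρ) 1 ρ (by positivity) one_pos hρ).2]
          rw [one_mul, mul_one, mul_div_assoc, div_self hρ.ne']
          norm_num
  calc (2 : ℝ≥0∞) * .ofReal Real.pi * ∫⁻ r in Ioi (0:ℝ),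
        ENNReal.ofReal r * ENNReal.ofReal (2 * Gf ρ r / r)
      ≤ (2 : ℝ≥0∞) * .ofReal Real.pi * ENNReal.ofReal 8 := by
        exact mul_le_mul_right step _
    _ = ENNReal.ofReal (16 * Real.pi) := by
        rw [show (2:ℝ≥0∞) = ENNReal.ofReal 2 by simp, ← ENNReal.ofReal_mul (by norm_num),
          ← ENNReal.ofReal_mul (by positivity)]
        ring_nf

noncomputable def fI (L r : ℝ) : ℝ≥0∞ :=
  Set.indicator (Iic L) (fun r => ENNReal.ofReal (3 / (8 * L * r))) r

lemma fI_meas (L : ℝ) : Measurable (fI L) :=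
  Measurable.indicator (by fun_prop) measurableSet_Iic

lemma K2 (l : ℂ) :
    ∫⁻ ζ : ℂ, Set.indicator (closedBall l ‖l‖)
        (fun ζ => ENNReal.ofReal (3 / (8 * ‖l‖ * ‖ζ - l‖))) ζ
      ≤ ENNReal.ofReal (3 / 4 * Real.pi) := by
  rcases eq_or_lt_of_le (norm_nonneg l) with hL | hL
  · have hball : closedBall l ‖l‖ = {l} := by
      rw [show ‖l‖ = (0:ℝ) from hL.symm]; exact closedBall_zero
    rw [lintegral_indicator measurableSet_closedBall, hball,
      setLIntegral_measure_zero _ _ (measure_singleton l)]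
    exact zero_le
  · set L := ‖l‖ with hLdef
    have hcomp : ∀ ζ : ℂ, Set.indicator (closedBall l L)
        (fun ζ => ENNReal.ofReal (3 / (8 * L * ‖ζ - l‖))) ζ = fI L ‖ζ + -l‖ := by
      intro ζ
      have habs : ‖ζ - l‖ = ‖ζ + -l‖ := by
        rw [sub_eq_add_neg]
      by_cases h : ζ ∈ closedBall l L
      · have h' : ‖ζ + -l‖ ∈ Iic L := by
          rw [mem_Iic, ← sub_eq_add_neg, ← dist_eq_norm]; exact mem_closedBall.mp h
        rw [Set.indicator_of_mem h, fI, Set.indicator_of_mem h', habs]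
      · have h' : ‖ζ + -l‖ ∉ Iic L := by
          rw [mem_Iic, ← sub_eq_add_neg, ← dist_eq_norm]
          exact fun hc => h (mem_closedBall.mpr hc)
        rw [Set.indicator_of_notMem h, fI, Set.indicator_of_notMem h']
    simp_rw [hcomp]
    rw [(measurePreserving_add_right volume (-l)).lintegral_comp
      (show Measurable fun w : ℂ => fI L ‖w‖ from (fI_meas L).comp measurable_norm)]
    rw [lintegral_fun_norm_complex (fI L) (fI_meas L)]
    have hcong : ∀ r ∈ Ioi (0:ℝ), ENNReal.ofReal r * fI L r
        = Set.indicator (Iic L) (fun _ => ENNReal.ofReal (3 / (8 * L))) r := by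
      intro r hr
      have hr0 : (0:ℝ) < r := hr
      by_cases h : r ∈ Iic L
      · rw [fI, Set.indicator_of_mem h, Set.indicator_of_mem h,
          ← ENNReal.ofReal_mul hr0.le]
        congr 1
        field_simp
      · rw [fI, Set.indicator_of_notMem h, Set.indicator_of_notMem h, mul_zero]
    rw [setLIntegral_congr_fun measurableSet_Ioi hcong]
    rw [lintegral_indicator measurableSet_Iic, setLIntegral_const,
      Measure.restrict_apply measurableSet_Iic]
    have hinter : Iic L ∩ Ioi (0:ℝ) = Ioc 0 L := by ext x; simp [and_comm]
    rw [hinter, Real.volume_Ioc, sub_zero]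
    rw [show (2:ℝ≥0∞) = ENNReal.ofReal 2 by simp, ← ENNReal.ofReal_mul (by norm_num),
      ← ENNReal.ofReal_mul (by positivity), ← ENNReal.ofReal_mul (by positivity)]
    apply ENNReal.ofReal_le_ofReal
    rw [show 2 * Real.pi * (3 / (8 * L) * L) = (3 / 4 * Real.pi) * (L / L) by ring,
      div_self hL.ne', mul_one]

/-- estimate (11.5): uniform bound on
`∫_ℂ (|ζ|²+1)ρ/(|ζ|²(1+ρ(|ζ|+|ζ|⁻¹))²|ζ−λ|)`. -/
theorem stmt_15 :
    ∃ n₂ : ℝ, 0 < n₂ ∧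
      ∀ (l : ℂ) (ρ : ℝ), 0 < ρ →
        ∫⁻ ζ : ℂ, ENNReal.ofReal ((‖ζ‖ ^ 2 + 1) * ρ) /
            (ENNReal.ofReal (‖ζ‖ ^ 2) *
              ENNReal.ofReal ((1 + ρ * (‖ζ‖ + ‖ζ‖⁻¹)) ^ 2) *
              ENNReal.ofReal (‖ζ - l‖))
          ≤ ENNReal.ofReal n₂ := by
  refine ⟨60, by norm_num, ?_⟩
  intro l ρ hρ
  set bound : ℂ → ℝ≥0∞ := fun ζ =>
    ENNReal.ofReal (2 * Gf ρ ‖ζ‖ / ‖ζ‖) +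
      Set.indicator (closedBall l ‖l‖)
        (fun ζ => ENNReal.ofReal (3 / (8 * ‖l‖ * ‖ζ - l‖))) ζ with hbound
  have hae : ∀ᵐ ζ : ℂ, ζ ∉ ({0, l} : Set ℂ) := (Set.to_countable _).ae_notMem volume
  have hmain : ∫⁻ ζ : ℂ, ENNReal.ofReal ((‖ζ‖ ^ 2 + 1) * ρ) /
            (ENNReal.ofReal (‖ζ‖ ^ 2) *
              ENNReal.ofReal ((1 + ρ * (‖ζ‖ + ‖ζ‖⁻¹)) ^ 2) *
              ENNReal.ofReal (‖ζ - l‖))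
      ≤ ∫⁻ ζ : ℂ, bound ζ := by
    apply lintegral_mono_ae
    filter_upwards [hae] with ζ hζ
    simp only [Set.mem_insert_iff, Set.mem_singleton_iff, not_or] at hζ
    obtain ⟨hζ0, hζl⟩ := hζ
    set t := ‖ζ‖ with htdef
    set d := ‖ζ - l‖ with hddef
    have ht : 0 < t := norm_pos_iff.mpr hζ0
    have hd : 0 < d := norm_pos_iff.mpr (sub_ne_zero.mpr hζl)
    have hfac : 0 < t ^ 2 * (1 + ρ * (t + t⁻¹)) ^ 2 := by
      have h1 : 0 < 1 + ρ * (t + t⁻¹) := by positivity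
      positivity
    have hEq : ENNReal.ofReal ((t ^ 2 + 1) * ρ) /
        (ENNReal.ofReal (t ^ 2) * ENNReal.ofReal ((1 + ρ * (t + t⁻¹)) ^ 2) *
          ENNReal.ofReal d)
        = ENNReal.ofReal (Gf ρ t / d) := by
      rw [← ENNReal.ofReal_mul (by positivity : (0:ℝ) ≤ t ^ 2),
        ← ENNReal.ofReal_mul (le_of_lt hfac),
        ← ENNReal.ofReal_div_of_pos (by positivity)]
      congr 1
      have hti : t * t⁻¹ = 1 := mul_inv_cancel₀ ht.ne'
      have hmul : t * (1 + ρ * (t + t⁻¹)) = t + ρ * (1 + t ^ 2) := by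
        calc t * (1 + ρ * (t + t⁻¹)) = t + ρ * t ^ 2 + ρ * (t * t⁻¹) := by ring
          _ = t + ρ * (1 + t ^ 2) := by rw [hti]; ring
      have hden : t ^ 2 * (1 + ρ * (t + t⁻¹)) ^ 2 = (t + ρ * (1 + t ^ 2)) ^ 2 := by
        rw [← hmul]; ring
      rw [hden]
      unfold Gf
      rw [div_div]
      congr 1
      ring
    rw [hEq]
    have hnorm : ‖ζ‖ = t := rfl
    rcases le_or_gt t (2 * d) with hcase | hcase
    · have hreal : Gf ρ t / d ≤ 2 * Gf ρ t / t := by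
        rw [div_le_div_iff₀ hd ht]
        nlinarith [Gf_nonneg hρ.le ht.le]
      calc ENNReal.ofReal (Gf ρ t / d) ≤ ENNReal.ofReal (2 * Gf ρ t / t) :=
            ENNReal.ofReal_le_ofReal hreal
        _ ≤ bound ζ := by rw [hbound]; simp only [hnorm]; exact self_le_add_right _ _
    · have h1 : t ≤ ‖l‖ + d := by
        have := norm_add_le (ζ - l) l
        simpa [sub_add_cancel, add_comm] using this
      have h2 : ‖l‖ ≤ t + d := by
        have := norm_sub_le ζ (ζ - l)
        simpa using this
      have hLpos : 0 < ‖l‖ := by linarith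
      have hmem : ζ ∈ closedBall l ‖l‖ := by
        rw [mem_closedBall, Complex.dist_eq, ← hddef]; linarith
      have key : Gf ρ t * (4 * t) ≤ 1 := by
        have := Gf_le_inv hρ ht
        exact (le_div_iff₀ (by positivity)).mp this
      have hreal : Gf ρ t / d ≤ 3 / (8 * ‖l‖ * d) := by
        rw [div_le_div_iff₀ hd (by positivity)]
        have h2L : 8 * ‖l‖ * d ≤ 12 * t * d := by nlinarith
        have hGn : 0 ≤ Gf ρ t := Gf_nonneg hρ.le ht.le
        nlinarith [mul_le_mul_of_nonneg_left h2L hGn,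
          mul_le_mul_of_nonneg_left key (by positivity : (0:ℝ) ≤ 3 * d)]
      calc ENNReal.ofReal (Gf ρ t / d) ≤ ENNReal.ofReal (3 / (8 * ‖l‖ * d)) :=
            ENNReal.ofReal_le_ofReal hreal
        _ ≤ bound ζ := by
            rw [hbound]
            simp only [Set.indicator_of_mem hmem, ← hddef]
            exact self_le_add_left _ _
  refine hmain.trans ?_
  have hsplit : ∫⁻ ζ : ℂ, bound ζ =
      (∫⁻ ζ : ℂ, ENNReal.ofReal (2 * Gf ρ ‖ζ‖ / ‖ζ‖)) +
        ∫⁻ ζ : ℂ, Set.indicator (closedBall l ‖l‖)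
          (fun ζ => ENNReal.ofReal (3 / (8 * ‖l‖ * ‖ζ - l‖))) ζ := by
    rw [hbound]
    exact lintegral_add_left ((Gf_measurable ρ).comp measurable_norm) _
  rw [hsplit]
  calc (∫⁻ ζ : ℂ, ENNReal.ofReal (2 * Gf ρ ‖ζ‖ / ‖ζ‖)) +
        ∫⁻ ζ : ℂ, Set.indicator (closedBall l ‖l‖)
          (fun ζ => ENNReal.ofReal (3 / (8 * ‖l‖ * ‖ζ - l‖))) ζ
      ≤ ENNReal.ofReal (16 * Real.pi) + ENNReal.ofReal (3 / 4 * Real.pi) :=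
        add_le_add (K1 ρ hρ) (K2 l)
    _ ≤ ENNReal.ofReal 60 := by
        rw [← ENNReal.ofReal_add (by positivity) (by positivity)]
        apply ENNReal.ofReal_le_ofReal
        nlinarith [Real.pi_lt_d2]
end
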